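/- If w is a solution of -w'' = ξ² w (ξ > 0) and y(t) = w(s(t))·√(2t - at²) with s(t) = (1/2)log(Mt/(2-at)) + π/(2ξ), then -y'' = (1+ξ²)(2t-at²)^{-2} y on (0, 2/a). -/

import Mathlib

open Real Set

theorem liouville_normal_form_reduction (a M ξ : ℝ)
    (ha : 0 < a) (hM : 0 < M) (hξ : 0 < ξ)
    (w : ℝ → ℝ) (hw : ContDiff ℝ 2 w)
    (hweq : ∀ s : ℝ, deriv (deriv w) s = -(ξ ^ 2 * w s)) :
    ∀ t ∈ Ioo (0 : ℝ) (2 / a),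
      deriv (deriv (fun t : ℝ =>
          w (1 / 2 * Real.log (M * t / (2 - a * t)) + π / (2 * ξ)) *
            Real.sqrt (2 * t - a * t ^ 2))) t +
        (1 + ξ ^ 2) * ((2 * t - a * t ^ 2) ^ 2)⁻¹ *
          (w (1 / 2 * Real.log (M * t / (2 - a * t)) + π / (2 * ξ)) *
            Real.sqrt (2 * t - a * t ^ 2)) = 0 := by
  have hwdiff : Differentiable ℝ w := hw.differentiable (by norm_num)
  have hw1 : ContDiff ℝ 1 (deriv w) := by
    rw [show (2 : WithTop ℕ∞) = 1 + 1 from rfl, contDiff_succ_iff_deriv] at hw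
    exact hw.2.2
  have hdwdiff : Differentiable ℝ (deriv w) := hw1.differentiable one_ne_zero
  set S : ℝ → ℝ := fun u => 1 / 2 * Real.log (M * u / (2 - a * u)) + π / (2 * ξ) with hSdef
  set Y : ℝ → ℝ := fun u => w (S u) * Real.sqrt (2 * u - a * u ^ 2) with hYdef
  set Y1 : ℝ → ℝ := fun u =>
    (deriv w (S u) + (1 - a * u) * w (S u)) / Real.sqrt (2 * u - a * u ^ 2) with hY1def
  -- basic facts on the interval
  have facts : ∀ u ∈ Ioo (0:ℝ) (2/a),
      0 < u ∧ 0 < 2 - a * u ∧ 0 < 2 * u - a * u ^ 2 ∧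
      0 < Real.sqrt (2 * u - a * u ^ 2) := by
    intro u hu
    have hu0 : 0 < u := hu.1
    have h2 : 0 < 2 - a * u := by
      have := (lt_div_iff₀ ha).mp hu.2
      linarith [mul_comm u a]
    have hφ : 0 < 2 * u - a * u ^ 2 := by nlinarith
    exact ⟨hu0, h2, hφ, Real.sqrt_pos.mpr hφ⟩
  -- derivative of S
  have hSder : ∀ u ∈ Ioo (0:ℝ) (2/a),
      HasDerivAt S (1 / (u * (2 - a * u))) u := by
    intro u hu
    obtain ⟨hu0, h2, hφ, hG⟩ := facts u hu
    have hnum : HasDerivAt (fun x : ℝ => M * x) M u := by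
      simpa using (hasDerivAt_id u).const_mul M
    have hden : HasDerivAt (fun x : ℝ => 2 - a * x) (-a) u := by
      simpa using ((hasDerivAt_id u).const_mul a).const_sub (2:ℝ)
    have hf : HasDerivAt (fun x : ℝ => M * x / (2 - a * x))
        ((M * (2 - a * u) - M * u * (-a)) / (2 - a * u) ^ 2) u :=
      hnum.div hden h2.ne'
    have hfu : M * u / (2 - a * u) ≠ 0 := by positivity
    have hlog := (hf.log hfu).const_mul (1/2 : ℝ)
    have := hlog.add_const (π / (2 * ξ))
    refine this.congr_deriv (Eq.symm ?_)
    field_simp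
    ring
  -- derivative of sqrt(2u - a u^2)
  have hGder : ∀ u ∈ Ioo (0:ℝ) (2/a),
      HasDerivAt (fun x : ℝ => Real.sqrt (2 * x - a * x ^ 2))
        ((2 - a * (2 * u)) / (2 * Real.sqrt (2 * u - a * u ^ 2))) u := by
    intro u hu
    obtain ⟨hu0, h2, hφ, hG⟩ := facts u hu
    have hφ' : HasDerivAt (fun x : ℝ => 2 * x - a * x ^ 2) (2 - a * (2 * u)) u := by
      have h1 : HasDerivAt (fun x : ℝ => 2 * x) 2 u := by
        simpa using (hasDerivAt_id u).const_mul (2:ℝ)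
      have h2' : HasDerivAt (fun x : ℝ => a * x ^ 2) (a * (2 * u)) u := by
        simpa using (hasDerivAt_pow 2 u).const_mul a
      exact h1.sub h2'
    exact hφ'.sqrt hφ.ne'
  -- first derivative of Y
  have hYder : ∀ u ∈ Ioo (0:ℝ) (2/a), HasDerivAt Y (Y1 u) u := by
    intro u hu
    obtain ⟨hu0, h2, hφ, hG⟩ := facts u hu
    have hws : HasDerivAt w (deriv w (S u)) (S u) := (hwdiff (S u)).hasDerivAt
    have hcomp : HasDerivAt (fun x => w (S x))
        (deriv w (S u) * (1 / (u * (2 - a * u)))) u := hws.comp u (hSder u hu)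
    have := hcomp.mul (hGder u hu)
    refine this.congr_deriv (Eq.symm ?_)
    have hGG : Real.sqrt (2 * u - a * u ^ 2) * Real.sqrt (2 * u - a * u ^ 2)
        = 2 * u - a * u ^ 2 := Real.mul_self_sqrt hφ.le
    rw [hY1def]
    beta_reduce
    generalize Real.sqrt (2 * u - a * u ^ 2) = g at hGG hG ⊢
    have hg0 : g ≠ 0 := hG.ne'
    field_simp
    linear_combination (-deriv w (S u)) * hGG
  -- second derivative
  intro t ht
  obtain ⟨ht0, h2t, hφt, hGt⟩ := facts t ht
  have hev : deriv Y =ᶠ[nhds t] Y1 :=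
    Filter.eventually_of_mem (isOpen_Ioo.mem_nhds ht) (fun u hu => (hYder u hu).deriv)
  have hder2 : deriv (deriv Y) t = deriv Y1 t := hev.deriv_eq
  -- derivative of Y1 at t
  have hN : HasDerivAt (fun u => deriv w (S u) + (1 - a * u) * w (S u))
      (-(ξ ^ 2 * w (S t)) * (1 / (t * (2 - a * t))) +
        ((-a) * w (S t) + (1 - a * t) * (deriv w (S t) * (1 / (t * (2 - a * t)))))) t := by
    have hdw : HasDerivAt (deriv w) (-(ξ ^ 2 * w (S t))) (S t) := by
      have := (hdwdiff (S t)).hasDerivAt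
      rwa [hweq] at this
    have h1 : HasDerivAt (fun u => deriv w (S u))
        (-(ξ ^ 2 * w (S t)) * (1 / (t * (2 - a * t)))) t := hdw.comp t (hSder t ht)
    have hlin : HasDerivAt (fun u : ℝ => 1 - a * u) (-a) t := by
      simpa using ((hasDerivAt_id t).const_mul a).const_sub (1:ℝ)
    have hws : HasDerivAt w (deriv w (S t)) (S t) := (hwdiff (S t)).hasDerivAt
    have hcomp : HasDerivAt (fun x => w (S x))
        (deriv w (S t) * (1 / (t * (2 - a * t)))) t := hws.comp t (hSder t ht)
    exact h1.add (hlin.mul hcomp)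
  have hY1der : HasDerivAt Y1
      (((-(ξ ^ 2 * w (S t)) * (1 / (t * (2 - a * t))) +
          ((-a) * w (S t) + (1 - a * t) * (deriv w (S t) * (1 / (t * (2 - a * t)))))) *
            Real.sqrt (2 * t - a * t ^ 2) -
          (deriv w (S t) + (1 - a * t) * w (S t)) *
            ((2 - a * (2 * t)) / (2 * Real.sqrt (2 * t - a * t ^ 2)))) /
        Real.sqrt (2 * t - a * t ^ 2) ^ 2) t :=
    hN.div (hGder t ht) hGt.ne'
  have hGG : Real.sqrt (2 * t - a * t ^ 2) * Real.sqrt (2 * t - a * t ^ 2)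
      = 2 * t - a * t ^ 2 := Real.mul_self_sqrt hφt.le
  show deriv (deriv Y) t + (1 + ξ ^ 2) * ((2 * t - a * t ^ 2) ^ 2)⁻¹ * Y t = 0
  rw [hder2, hY1der.deriv, hYdef]
  beta_reduce
  generalize Real.sqrt (2 * t - a * t ^ 2) = g at hGG hGt ⊢
  have hg0 : g ≠ 0 := hGt.ne'
  have ht1 : t ≠ 0 := ht0.ne'
  have ht2 : 2 - a * t ≠ 0 := h2t.ne'
  have ht3 : 2 * t - a * t ^ 2 ≠ 0 := hφt.ne'
  rw [show t * (2 - a * t) = g ^ 2 by linear_combination -hGG, show 2 * t - a * t ^ 2 = g ^ 2 by linear_combination -hGG]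
  field_simp
  linear_combination (-(a * w (S t))) * hGG
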